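/- Assume that every simple graph on 18 vertices contains a 4-clique or an independent 4-set (i.e., R(4,4) ≤ 18). Then every simple graph on 24 vertices that contains no 4-clique and no independent 5-set has minimum degree at least 6. -/

import Mathlib

/-- Assuming R(4,4) ≤ 18, every graph on 24 vertices with no 4-clique and no
independent 5-set has minimum degree at least 6. -/
theorem min_degree_ge_6
    (hR44 : ∀ G : SimpleGraph (Fin 18),
      (∃ s : Finset (Fin 18), G.IsNClique 4 s) ∨ (∃ s : Finset (Fin 18), Gᶜ.IsNClique 4 s))
    (G : SimpleGraph (Fin 24)) [DecidableRel G.Adj]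
    (h4 : G.CliqueFree 4) (h5 : Gᶜ.CliqueFree 5) (v : Fin 24) :
    6 ≤ G.degree v := by
  by_contra hdeg
  push_neg at hdeg
  -- S : non-neighbors of v, excluding v
  set S : Finset (Fin 24) := Finset.univ \ insert v (G.neighborFinset v) with hS
  have hScard : 18 ≤ S.card := by
    have h1 : (insert v (G.neighborFinset v)).card ≤ 6 := by
      have := Finset.card_insert_le v (G.neighborFinset v)
      have hd : (G.neighborFinset v).card ≤ 5 := by
        exact Nat.lt_succ_iff.mp hdeg
      omega
    have h2 : S.card = 24 - (insert v (G.neighborFinset v)).card := by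
      rw [hS, Finset.card_sdiff_of_subset (Finset.subset_univ _)]
      simp
    omega
  obtain ⟨T, hTS, hT⟩ := Finset.exists_subset_card_eq hScard
  have e := T.equivFin
  set f : Fin 18 → Fin 24 := fun i => (e.symm (Fin.cast hT.symm i) : Fin 24) with hf
  have hfinj : Function.Injective f := by
    intro a b hab
    have := Subtype.ext hab
    exact Fin.cast_injective _ (e.symm.injective this)
  have hfS : ∀ i, f i ∈ S := fun i => hTS (e.symm (Fin.cast hT.symm i)).2
  have hfv : ∀ i, f i ≠ v ∧ ¬ G.Adj v (f i) := by
    intro i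
    have := hfS i
    rw [hS, Finset.mem_sdiff, Finset.mem_insert] at this
    push_neg at this
    exact ⟨this.2.1, by simpa using this.2.2⟩
  rcases hR44 (SimpleGraph.comap f G) with ⟨s, hs⟩ | ⟨s, hs⟩
  · -- 4-clique in G
    refine h4 (s.map ⟨f, hfinj⟩) ⟨?_, ?_⟩
    · intro x hx y hy hxy
      simp only [Finset.coe_map, Set.mem_image, Finset.mem_coe] at hx hy
      obtain ⟨a, ha, rfl⟩ := hx
      obtain ⟨b, hb, rfl⟩ := hy
      exact hs.1 ha hb (fun h => hxy (by rw [h]))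
    · simpa using hs.2
  · -- independent 4-set, together with v gives independent 5-set
    refine h5 (insert v (s.map ⟨f, hfinj⟩)) ⟨?_, ?_⟩
    · intro x hx y hy hxy
      simp only [Finset.coe_insert, Set.mem_insert_iff, Finset.coe_map, Set.mem_image,
        Finset.mem_coe] at hx hy
      have key : ∀ a b : Fin 18, a ∈ s → b ∈ s → f a ≠ f b → Gᶜ.Adj (f a) (f b) := by
        intro a b ha hb hne
        have hab : a ≠ b := fun h => hne (by rw [h])
        have := hs.1 ha hb hab
        rw [SimpleGraph.compl_adj] at this ⊢
        exact ⟨hne, this.2⟩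
      rcases hx with rfl | ⟨a, ha, rfl⟩
      · rcases hy with rfl | ⟨b, hb, rfl⟩
        · exact absurd rfl hxy
        · exact (SimpleGraph.compl_adj _ _ _).mpr ⟨hxy, (hfv b).2⟩
      · rcases hy with rfl | ⟨b, hb, rfl⟩
        · exact ((SimpleGraph.compl_adj _ _ _).mpr ⟨hxy.symm, (hfv a).2⟩).symm
        · exact key a b ha hb hxy
    · rw [Finset.card_insert_of_notMem, Finset.card_map, hs.2]
      intro hmem
      obtain ⟨a, _, ha⟩ := Finset.mem_map.mp hmem
      exact (hfv a).1 ha
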